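/- arXiv:2109.02565 — 2 statements merged into one kernel-verified Lean document; each statement's English description precedes it below -/
import Mathlib

section
/- Fix κ > 0 and define, for locally integrable g : (0,∞) → ℝ, the operator T_{−1}g(ξ) := (1/ξ)∫_0^ξ e^{κ(η−ξ)} g(η) dη for ξ > 0. Then there is a constant C (depending only on κ) such that for every g ∈ L³((0,∞)), (∫_0^∞ |T_{−1}g(ξ)|² dξ)^{1/2} ≤ C·(∫_0^∞ |g(η)|³ dη)^{1/3}. -/
open MeasureTheory Real Set Filter

/-- Sliding average `⨍_α f(y) = (1/α) ∫_{y-α}^{y} f(z) dz`. -/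
noncomputable def fint (α : ℝ) (f : ℝ → ℝ) (y : ℝ) : ℝ :=
  (1 / α) * ∫ z in (y - α)..y, f z

/-- Finite difference slope `Δ_α f(y) = (f(y) - f(y-α))/α`. -/
noncomputable def slopeOp (α : ℝ) (f : ℝ → ℝ) (y : ℝ) : ℝ :=
  (f y - f (y - α)) / α

/-- The profile `L_s(y) = (2s/π) arctan((1+s²/3) y)`. -/
noncomputable def Ls (s y : ℝ) : ℝ := (2 * s / Real.pi) * Real.arctan ((1 + s ^ 2 / 3) * y)

/-- `δ_α[f,g](y) = ⨍_α f ⨍_α g - ⨍_{-α} f ⨍_{-α} g`. -/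
noncomputable def deltaOp (α : ℝ) (f g : ℝ → ℝ) (y : ℝ) : ℝ :=
  fint α f y * fint α g y - fint (-α) f y * fint (-α) g y

/-- `J_α[f,g](y) = ⨍_α f ⨍_α g - 2 f g + ⨍_{-α} f ⨍_{-α} g`. -/
noncomputable def Jop (α : ℝ) (f g : ℝ → ℝ) (y : ℝ) : ℝ :=
  fint α f y * fint α g y - 2 * f y * g y + fint (-α) f y * fint (-α) g y

/-- The `H¹` norm `(∫ g² + ∫ (g')²)^{1/2}`. -/
noncomputable def H1norm (g : ℝ → ℝ) : ℝ :=
  Real.sqrt ((∫ y : ℝ, g y ^ 2) + ∫ y : ℝ, deriv g y ^ 2)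

/-- The operator `T₋₁ g(ξ) = ξ⁻¹ ∫₀^ξ e^{κ(η-ξ)} g(η) dη`. -/
noncomputable def Tm1 (κ : ℝ) (g : ℝ → ℝ) (ξ : ℝ) : ℝ :=
  (1 / ξ) * ∫ η in (0:ℝ)..ξ, Real.exp (κ * (η - ξ)) * g η

theorem expIntBound (a ξ : ℝ) (ha : 0 < a) (hξ : 0 < ξ) :
    ∫ η in Ioc (0:ℝ) ξ, Real.exp (a*(η-ξ)) ≤ min ξ (1/a) := by
  have h1 : ∫ η in Ioc (0:ℝ) ξ, Real.exp (a*(η-ξ))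
      = ∫ η in (0:ℝ)..ξ, Real.exp (a*(η-ξ)) := by
    rw [intervalIntegral.integral_of_le hξ.le]
  have h2 : ∫ η in (0:ℝ)..ξ, Real.exp (a*(η-ξ)) = (1 - Real.exp (-(a*ξ)))/a := by
    have := intervalIntegral.integral_comp_sub_right (a := (0:ℝ)) (b := ξ)
      (fun t => Real.exp (a*t)) ξ
    rw [this]
    have := intervalIntegral.integral_comp_mul_left (a := (0:ℝ) - ξ) (b := ξ - ξ)
      (fun t => Real.exp t) (ne_of_gt ha)
    rw [this]
    simp [integral_exp, smul_eq_mul]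
    ring_nf
  rw [h1, h2]
  refine le_min ?_ ?_
  · rw [div_le_iff₀ ha]
    have := Real.add_one_le_exp (-(a*ξ))
    nlinarith
  · apply div_le_div_of_nonneg_right ?_ ha.le
    have := Real.exp_nonneg (-(a*ξ)); linarith

theorem pointwiseBound (κ : ℝ) (hκ : 0 < κ) (g₀ : ℝ → ℝ) (hg₀ : MemLp g₀ 3 volume)
    (ξ : ℝ) (hξ : 0 < ξ) :
    |Tm1 κ g₀ ξ| ≤ ((min ξ (1/(3*κ/2))) ^ ((2:ℝ)/3) / ξ)
      * (∫ η in Ioi (0:ℝ), |g₀ η|^3) ^ ((1:ℝ)/3) := by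
  set a : ℝ := 3*κ/2 with ha
  have ha0 : 0 < a := by positivity
  set c : ℝ := 1/a with hc
  set μ := volume.restrict (Ioc (0:ℝ) ξ) with hμ
  set f : ℝ → ℝ := fun η => Real.exp (κ*(η-ξ)) with hf
  set N : ℝ := (∫ η in Ioi (0:ℝ), |g₀ η|^3) ^ ((1:ℝ)/3) with hN
  have hg3int : Integrable (fun η => |g₀ η|^3) volume := by
    have h := hg₀.integrable_norm_rpow (by norm_num) (by norm_num)
    refine h.congr (ae_of_all _ fun x => ?_)
    show ‖g₀ x‖ ^ ((3:ENNReal)).toReal = |g₀ x| ^ 3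
    rw [Real.norm_eq_abs, show ((3:ENNReal)).toReal = ((3:ℕ):ℝ) from by norm_num,
      Real.rpow_natCast]
  have habs : |Tm1 κ g₀ ξ| ≤ (1/ξ) * ∫ η, ‖f η‖ * ‖g₀ η‖ ∂μ := by
    simp only [Tm1]; rw [abs_mul, abs_of_pos (by positivity : (0:ℝ) < 1/ξ),
      intervalIntegral.integral_of_le hξ.le]
    gcongr
    calc |∫ η in Ioc (0:ℝ) ξ, f η * g₀ η| ≤ ∫ η in Ioc (0:ℝ) ξ, ‖f η * g₀ η‖ := by
          rw [← Real.norm_eq_abs]; exact norm_integral_le_integral_norm _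
      _ = ∫ η, ‖f η‖ * ‖g₀ η‖ ∂μ := by simp [norm_mul]; rfl
  have hpq : Real.HolderConjugate (3/2) 3 := Real.holderConjugate_iff.mpr ⟨by norm_num, by norm_num⟩
  have hfmem : MemLp f (ENNReal.ofReal (3/2)) μ := by
    refine MemLp.of_bound ?_ 1 ?_
    · exact ((Real.continuous_exp.comp (by continuity)).stronglyMeasurable).aestronglyMeasurable
    · filter_upwards [ae_restrict_mem measurableSet_Ioc] with η hη
      rw [hf, Real.norm_eq_abs, abs_of_pos (Real.exp_pos _)]
      exact Real.exp_le_one_iff.mpr (by nlinarith [hη.2])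
  have hg3mem : MemLp g₀ (ENNReal.ofReal 3) μ := by
    have : (ENNReal.ofReal 3) = 3 := by simp [ENNReal.ofReal_ofNat]
    rw [this]; exact hg₀.restrict _
  have holder := MeasureTheory.integral_mul_norm_le_Lp_mul_Lq hpq hfmem hg3mem
  -- first factor
  have hfac1 : (∫ η, ‖f η‖ ^ (3/2:ℝ) ∂μ) ^ (1/(3/2):ℝ) ≤ (min ξ c) ^ ((2:ℝ)/3) := by
    have heq : ∫ η, ‖f η‖ ^ (3/2:ℝ) ∂μ = ∫ η in Ioc (0:ℝ) ξ, Real.exp (a*(η-ξ)) := by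
      apply integral_congr_ae
      filter_upwards with η
      rw [hf, Real.norm_eq_abs, abs_of_pos (Real.exp_pos _), ← Real.exp_mul]
      rw [ha]; ring_nf
    have hb := expIntBound a ξ ha0 hξ
    rw [heq]
    have h23 : (1/(3/2):ℝ) = (2:ℝ)/3 := by norm_num
    rw [h23]
    apply Real.rpow_le_rpow (integral_nonneg fun η => (Real.exp_pos _).le) (hb.trans_eq rfl)
      (by norm_num)
  -- second factor
  have hfac2 : (∫ η, ‖g₀ η‖ ^ (3:ℝ) ∂μ) ^ (1/3:ℝ) ≤ N := by
    have heq : ∫ η, ‖g₀ η‖ ^ (3:ℝ) ∂μ = ∫ η in Ioc (0:ℝ) ξ, |g₀ η|^3 := by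
      apply integral_congr_ae
      filter_upwards with η
      rw [Real.norm_eq_abs, show (3:ℝ) = ((3:ℕ):ℝ) by norm_num, Real.rpow_natCast]
    rw [heq, hN]
    apply Real.rpow_le_rpow (setIntegral_nonneg measurableSet_Ioc fun η _ => by positivity)
      ?_ (by norm_num)
    apply setIntegral_mono_set hg3int.integrableOn
      (ae_of_all _ fun η => by positivity)
      (ae_of_all _ fun η hη => hη.1)
  calc |Tm1 κ g₀ ξ| ≤ (1/ξ) * ∫ η, ‖f η‖ * ‖g₀ η‖ ∂μ := habs
    _ ≤ (1/ξ) * ((min ξ c) ^ ((2:ℝ)/3) * N) := by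
        apply mul_le_mul_of_nonneg_left ?_ (by positivity)
        refine holder.trans ?_
        exact mul_le_mul hfac1 hfac2
          (Real.rpow_nonneg (integral_nonneg fun η =>
            Real.rpow_nonneg (norm_nonneg _) _) _)
          (Real.rpow_nonneg (le_min hξ.le (by positivity)) _)
    _ = ((min ξ c) ^ ((2:ℝ)/3) / ξ) * N := by ring

/-- `T₋₁` is bounded from `L³((0,∞))` to `L²((0,∞))`. -/
theorem Tm1_L3_to_L2 (κ : ℝ) (hκ : 0 < κ) :
    ∃ C : ℝ, 0 < C ∧ ∀ g : ℝ → ℝ, MemLp g 3 (volume.restrict (Set.Ioi 0)) →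
      (∫ ξ in Set.Ioi (0:ℝ), |Tm1 κ g ξ| ^ 2) ^ ((1:ℝ)/2)
        ≤ C * (∫ η in Set.Ioi (0:ℝ), |g η| ^ 3) ^ ((1:ℝ)/3) := by
  have ha0 : 0 < 3*κ/2 := by positivity
  set c : ℝ := 1/(3*κ/2) with hc
  have hc0 : 0 < c := by positivity
  set B : ℝ → ℝ := fun ξ => (min ξ c) ^ ((2:ℝ)/3) / ξ with hB
  have hBcont : ContinuousOn (fun ξ => (B ξ)^2) (Ioi (0:ℝ)) := by
    apply ContinuousOn.pow
    apply ContinuousOn.div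
    · exact ContinuousOn.rpow_const ((continuous_id.min continuous_const).continuousOn)
        (fun x _ => Or.inr (by norm_num))
    · exact continuousOn_id
    · exact fun x hx => ne_of_gt hx
  have hBint : IntegrableOn (fun ξ => (B ξ)^2) (Ioi (0:ℝ)) := by
    rw [← Ioc_union_Ioi_eq_Ioi hc0.le]
    apply IntegrableOn.union
    · have hd : IntegrableOn (fun ξ:ℝ => ξ ^ (-(2:ℝ)/3)) (Ioc 0 c) := by
        rw [← intervalIntegrable_iff_integrableOn_Ioc_of_le hc0.le]
        exact intervalIntegral.intervalIntegrable_rpow' (by norm_num)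
      refine Integrable.mono' hd
        ((hBcont.mono (fun x hx => hx.1)).aestronglyMeasurable measurableSet_Ioc) ?_
      filter_upwards [ae_restrict_mem measurableSet_Ioc] with ξ hξ
      have hξ0 : (0:ℝ) < ξ := hξ.1
      have hBval : B ξ = ξ ^ (-(1:ℝ)/3) := by
        simp only [hB, min_eq_left hξ.2]
        rw [show (-(1:ℝ)/3) = (2:ℝ)/3 - 1 by norm_num, Real.rpow_sub hξ0, Real.rpow_one]
      rw [Real.norm_eq_abs, abs_of_nonneg (sq_nonneg _), hBval,
        ← Real.rpow_natCast (ξ ^ (-(1:ℝ)/3)) 2, ← Real.rpow_mul hξ0.le]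
      apply le_of_eq
      congr 1
      push_cast; ring
    · have hd : IntegrableOn (fun ξ:ℝ => c ^ ((4:ℝ)/3) * ξ ^ (-(2:ℝ))) (Ioi c) :=
        (integrableOn_Ioi_rpow_of_lt (by norm_num) hc0).const_mul _
      refine Integrable.mono' hd
        ((hBcont.mono (fun x hx => hc0.trans hx)).aestronglyMeasurable measurableSet_Ioi) ?_
      filter_upwards [ae_restrict_mem measurableSet_Ioi] with ξ hξ
      have hξ0 : (0:ℝ) < ξ := hc0.trans hξ
      have hBval : B ξ = c ^ ((2:ℝ)/3) / ξ := by
        simp only [hB, min_eq_right (le_of_lt (show c < ξ from hξ))]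
      rw [Real.norm_eq_abs, abs_of_nonneg (sq_nonneg _), hBval, div_pow]
      apply le_of_eq
      have h1 : (c ^ ((2:ℝ)/3))^2 = c ^ ((4:ℝ)/3) := by
        rw [← Real.rpow_natCast (c ^ ((2:ℝ)/3)) 2, ← Real.rpow_mul hc0.le]
        norm_num
      have h2 : (ξ:ℝ)^(2:ℕ) = ξ ^ ((2:ℕ):ℝ) := (Real.rpow_natCast ξ 2).symm
      rw [h1, h2, div_eq_mul_inv, ← Real.rpow_neg hξ0.le]
      norm_num
  set D : ℝ := ∫ ξ in Ioi (0:ℝ), (B ξ)^2 with hD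
  have hD0 : 0 ≤ D := setIntegral_nonneg measurableSet_Ioi fun ξ _ => sq_nonneg _
  refine ⟨Real.sqrt D + 1, by positivity, ?_⟩
  intro g hg
  obtain ⟨G, hGsm, hgG⟩ := hg.aestronglyMeasurable
  set g₀ : ℝ → ℝ := (Ioi (0:ℝ)).indicator G with hg₀def
  have hg₀mem : MemLp g₀ 3 volume :=
    (memLp_indicator_iff_restrict measurableSet_Ioi).2 (hg.ae_eq hgG)
  have hgg₀ae : ∀ᵐ η ∂(volume : Measure ℝ), η ∈ Ioi (0:ℝ) → g η = g₀ η := by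
    filter_upwards [(ae_restrict_iff' measurableSet_Ioi).1 hgG] with x hx hx0
    rw [hx hx0, hg₀def, indicator_of_mem hx0]
  have hTeq : ∀ ξ ∈ Ioi (0:ℝ), Tm1 κ g ξ = Tm1 κ g₀ ξ := by
    intro ξ hξ
    simp only [Tm1]
    congr 1
    apply intervalIntegral.integral_congr_ae
    filter_upwards [hgg₀ae] with η hη hη'
    rw [Set.uIoc_of_le (le_of_lt hξ)] at hη'
    rw [hη hη'.1]
  have hgN : ∫ η in Ioi (0:ℝ), |g₀ η|^3 = ∫ η in Ioi (0:ℝ), |g η|^3 := by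
    apply integral_congr_ae
    rw [Filter.EventuallyEq, ae_restrict_iff' measurableSet_Ioi]
    filter_upwards [hgg₀ae] with η hη hη'
    rw [hη hη']
  set N : ℝ := (∫ η in Ioi (0:ℝ), |g η|^3) ^ ((1:ℝ)/3) with hN
  have hN0 : 0 ≤ N :=
    Real.rpow_nonneg (setIntegral_nonneg measurableSet_Ioi fun _ _ => by positivity) _
  have hpt : ∀ ξ ∈ Ioi (0:ℝ), |Tm1 κ g ξ| ≤ B ξ * N := by
    intro ξ hξ
    rw [hTeq ξ hξ]
    have h := pointwiseBound κ hκ g₀ hg₀mem ξ hξ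
    rw [hgN] at h
    exact h
  -- measurability of the integrand
  have hφint : ∀ p q : ℝ, IntervalIntegrable (fun η => Real.exp (κ*η) * g₀ η) volume p q := by
    intro p q
    rw [intervalIntegrable_iff]
    haveI : IsFiniteMeasure (volume.restrict (Set.uIoc p q)) := by
      constructor
      rw [Measure.restrict_apply_univ, Set.uIoc]
      exact measure_Ioc_lt_top
    have hint : IntegrableOn g₀ (Set.uIoc p q) volume := by
      have h1 : MemLp g₀ 3 (volume.restrict (Set.uIoc p q)) := hg₀mem.restrict _
      exact memLp_one_iff_integrable.1 (h1.mono_exponent (by norm_num))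
    refine Integrable.bdd_mul hint ?_ (c := Real.exp (κ * max p q)) ?_
    · exact ((Real.continuous_exp.comp (continuous_const.mul continuous_id)).stronglyMeasurable).aestronglyMeasurable
    · filter_upwards [ae_restrict_mem measurableSet_uIoc] with η hη
      rw [Real.norm_eq_abs, abs_of_pos (Real.exp_pos _)]
      exact Real.exp_le_exp.2 (mul_le_mul_of_nonneg_left hη.2 hκ.le)
  have hFcont : Continuous (fun ξ => ∫ η in (0:ℝ)..ξ, Real.exp (κ*η) * g₀ η) :=
    intervalIntegral.continuous_primitive hφint 0
  set T0 : ℝ → ℝ := fun ξ =>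
    (1/ξ) * (Real.exp (-(κ*ξ)) * ∫ η in (0:ℝ)..ξ, Real.exp (κ*η) * g₀ η) with hT0
  have hTcont : ContinuousOn T0 (Ioi (0:ℝ)) := by
    apply ContinuousOn.mul
    · exact continuousOn_const.div continuousOn_id (fun x hx => ne_of_gt hx)
    · exact (((Real.continuous_exp.comp (continuous_const.mul continuous_id).neg).mul
        hFcont)).continuousOn
  have hTrep : ∀ ξ ∈ Ioi (0:ℝ), Tm1 κ g₀ ξ = T0 ξ := by
    intro ξ hξ
    have key : ∫ η in (0:ℝ)..ξ, Real.exp (κ*(η-ξ)) * g₀ η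
        = Real.exp (-(κ*ξ)) * ∫ η in (0:ℝ)..ξ, Real.exp (κ*η) * g₀ η := by
      rw [← intervalIntegral.integral_const_mul]
      apply intervalIntegral.integral_congr
      intro η hη
      simp only
      rw [← mul_assoc, ← Real.exp_add]
      congr 2
      ring
    simp only [Tm1, hT0]
    rw [key]
  have haesm : AEStronglyMeasurable (fun ξ => |Tm1 κ g ξ|^2) (volume.restrict (Ioi (0:ℝ))) := by
    have h1 : AEStronglyMeasurable (fun ξ => |T0 ξ|^2) (volume.restrict (Ioi (0:ℝ))) :=
      ((hTcont.abs).pow 2).aestronglyMeasurable measurableSet_Ioi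
    apply h1.congr
    rw [Filter.EventuallyEq, ae_restrict_iff' measurableSet_Ioi]
    filter_upwards with ξ hξ
    rw [← hTrep ξ hξ, ← hTeq ξ hξ]
  have hbound : ∀ᵐ ξ ∂(volume.restrict (Ioi (0:ℝ))), |Tm1 κ g ξ|^2 ≤ (B ξ)^2 * N^2 := by
    filter_upwards [ae_restrict_mem measurableSet_Ioi] with ξ hξ
    calc |Tm1 κ g ξ|^2 ≤ (B ξ * N)^2 := by
          apply pow_le_pow_left₀ (abs_nonneg _) (hpt ξ hξ)
      _ = (B ξ)^2 * N^2 := by ring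
  have hbound' : ∀ᵐ ξ ∂(volume.restrict (Ioi (0:ℝ))), ‖|Tm1 κ g ξ|^2‖ ≤ (B ξ)^2 * N^2 := by
    filter_upwards [hbound] with ξ h
    rwa [Real.norm_eq_abs, abs_of_nonneg (sq_nonneg _)]
  have hint2 : Integrable (fun ξ => |Tm1 κ g ξ|^2) (volume.restrict (Ioi (0:ℝ))) :=
    Integrable.mono' (hBint.mul_const (N^2)) haesm hbound'
  have hmono : ∫ ξ in Ioi (0:ℝ), |Tm1 κ g ξ|^2 ≤ D * N^2 := by
    have heq : ∫ ξ in Ioi (0:ℝ), (B ξ)^2 * N^2 = D * N^2 := by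
      rw [hD, integral_mul_const]
    rw [← heq]
    exact integral_mono_ae hint2 (hBint.mul_const _) hbound
  calc (∫ ξ in Ioi (0:ℝ), |Tm1 κ g ξ|^2) ^ ((1:ℝ)/2)
      ≤ (D * N^2) ^ ((1:ℝ)/2) := Real.rpow_le_rpow
        (setIntegral_nonneg measurableSet_Ioi fun _ _ => sq_nonneg _) hmono (by norm_num)
    _ = Real.sqrt D * N := by
        rw [Real.mul_rpow hD0 (sq_nonneg _), Real.sqrt_eq_rpow]
        congr 1
        rw [← Real.rpow_natCast N 2, ← Real.rpow_mul hN0]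
        norm_num
    _ ≤ (Real.sqrt D + 1) * N := by nlinarith [Real.sqrt_nonneg D, hN0]
end

section
/- There is an absolute constant C such that for all s ∈ (0,1], all y ≥ 0 and all α > 0: |δ_α[L_s](y)| ≤ C·s²·[ 1_{{α ≤ y}}·α·ln(e+α)·min{y, y^{−2}} + 1_{{y ≤ α}}·y·min{α, α^{−1}} ], and |∂_y δ_α[L_s](y)| ≤ C·s²·[ 1_{{α ≤ y}}·α·ln(e+α)·⟨y−α⟩^{−1}·⟨y⟩^{−2} + 1_{{y ≤ α}}·min{α, α^{−1}} ]. -/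
open MeasureTheory Real Set Filter

noncomputable def LsD (s x : ℝ) : ℝ :=
  (2 * s / Real.pi) * ((1 + s ^ 2 / 3) / (1 + (1 + s ^ 2 / 3) ^ 2 * x ^ 2))

noncomputable def LsDD (s x : ℝ) : ℝ :=
  -((2 * s / Real.pi) * (2 * (1 + s ^ 2 / 3) ^ 3 * x / (1 + (1 + s ^ 2 / 3) ^ 2 * x ^ 2) ^ 2))

noncomputable def Phi (s y : ℝ) : ℝ := ∫ t in (0:ℝ)..y, Ls s t

noncomputable def Dfun (s α t : ℝ) : ℝ :=
  (2 * (Phi s t - Phi s (t - α)) * (Ls s t - Ls s (t - α))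
    - 2 * (Phi s (t + α) - Phi s t) * (Ls s (t + α) - Ls s t)) / α ^ 2

lemma continuous_Ls (s : ℝ) : Continuous (Ls s) := by
  unfold Ls
  exact continuous_const.mul (Real.continuous_arctan.comp (continuous_const.mul continuous_id))

lemma hasDerivAt_Ls (s x : ℝ) : HasDerivAt (Ls s) (LsD s x) x := by
  have h1 : HasDerivAt (fun x : ℝ => (1 + s ^ 2 / 3) * x) (1 + s ^ 2 / 3) x := by
    simpa using (hasDerivAt_id x).const_mul (1 + s ^ 2 / 3)
  have h2 := (Real.hasDerivAt_arctan ((1 + s ^ 2 / 3) * x)).comp x h1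
  have h3 := h2.const_mul (2 * s / Real.pi)
  refine h3.congr_deriv ?_
  unfold LsD
  field_simp

lemma hasDerivAt_LsD (s x : ℝ) : HasDerivAt (LsD s) (LsDD s x) x := by
  have hne : ((fun x : ℝ => 1 + (1 + s ^ 2 / 3) ^ 2 * x ^ 2) x) ≠ 0 := by positivity
  have h1 : HasDerivAt (fun x : ℝ => 1 + (1 + s ^ 2 / 3) ^ 2 * x ^ 2)
      ((1 + s ^ 2 / 3) ^ 2 * (2 * x)) x := by
    simpa [mul_comm] using ((hasDerivAt_pow 2 x).const_mul ((1 + s ^ 2 / 3) ^ 2)).const_add 1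
  have h2 := (h1.inv hne).const_mul ((2 * s / Real.pi) * (1 + s ^ 2 / 3))
  have e : LsD s = fun y => 2 * s / Real.pi * (1 + s ^ 2 / 3)
      * (fun x : ℝ => 1 + (1 + s ^ 2 / 3) ^ 2 * x ^ 2)⁻¹ y := by
    funext z; unfold LsD; simp only [Pi.inv_apply]; ring
  rw [e]
  refine h2.congr_deriv ?_
  · unfold LsDD
    have hpos : (0:ℝ) < 1 + (1 + s ^ 2 / 3) ^ 2 * x ^ 2 := by positivity
    field_simp

lemma mvt_abs {f f' : ℝ → ℝ} {A B M : ℝ} (hAB : A ≤ B)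
    (hf : ∀ x ∈ Icc A B, HasDerivAt f (f' x) x)
    (hM : ∀ x ∈ Icc A B, |f' x| ≤ M) : |f B - f A| ≤ M * (B - A) := by
  have h := (convex_Icc A B).norm_image_sub_le_of_norm_hasDerivWithin_le
    (fun x hx => (hf x hx).hasDerivWithinAt)
    (fun x hx => by rw [Real.norm_eq_abs]; exact hM x hx)
    (left_mem_Icc.2 hAB) (right_mem_Icc.2 hAB)
  rwa [Real.norm_eq_abs, Real.norm_eq_abs, abs_of_nonneg (sub_nonneg.2 hAB)] at h

lemma arctan_le_self' {x : ℝ} (hx : 0 ≤ x) : Real.arctan x ≤ x := by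
  have h := mvt_abs (f := Real.arctan) (f' := fun t => 1 / (1 + t ^ 2)) (M := 1) hx
    (fun t _ => Real.hasDerivAt_arctan t)
    (fun t _ => by
      rw [abs_of_pos (by positivity)]
      rw [div_le_one (by positivity)]
      nlinarith [sq_nonneg t])
  rw [Real.arctan_zero, sub_zero, one_mul, sub_zero] at h
  exact (le_abs_self _).trans h

lemma arctan_nonneg' {x : ℝ} (hx : 0 ≤ x) : 0 ≤ Real.arctan x := by
  have := Real.arctan_strictMono.monotone hx
  rwa [Real.arctan_zero] at this

lemma arctan_tail {p : ℝ} (hp : 0 ≤ p) :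
    Real.pi / 2 - Real.arctan p ≤ 3 / Real.sqrt (1 + p ^ 2) := by
  have h3 : (0:ℝ) < Real.sqrt (1 + p ^ 2) := Real.sqrt_pos.2 (by positivity)
  rcases le_total p 1 with h | h
  · have h1 : Real.sqrt (1 + p ^ 2) ≤ 3 / 2 := by
      have : (1:ℝ) + p ^ 2 ≤ (3/2) ^ 2 := by nlinarith
      have h2 := Real.sqrt_le_sqrt this
      rwa [Real.sqrt_sq (by norm_num)] at h2
    have h4 : Real.pi ≤ 4 := Real.pi_le_four
    have h5 := arctan_nonneg' hp
    rw [le_div_iff₀ h3]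
    nlinarith
  · have hppos : 0 < p := lt_of_lt_of_le one_pos h
    have h1 : Real.pi / 2 - Real.arctan p = Real.arctan p⁻¹ :=
      (Real.arctan_inv_of_pos hppos).symm
    rw [h1]
    have h2 : Real.arctan p⁻¹ ≤ p⁻¹ := arctan_le_self' (by positivity)
    have h4 : Real.sqrt (1 + p ^ 2) ≤ 3 * p := by
      have : (1:ℝ) + p ^ 2 ≤ (3 * p) ^ 2 := by nlinarith
      have h5 := Real.sqrt_le_sqrt this
      rwa [Real.sqrt_sq (by positivity)] at h5
    calc Real.arctan p⁻¹ ≤ p⁻¹ := h2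
      _ ≤ 3 / Real.sqrt (1 + p ^ 2) := by
          rw [le_div_iff₀ h3, inv_mul_le_iff₀ hppos]
          linarith

section Bounds
variable {s p q x : ℝ}

lemma beta_ge_one (s : ℝ) : 1 ≤ 1 + s ^ 2 / 3 := by nlinarith [sq_nonneg s]

lemma beta_le (hs1 : s ≤ 1) (hs : 0 < s) : 1 + s ^ 2 / 3 ≤ 4 / 3 := by nlinarith

lemma abs_Ls_le (hs : 0 < s) (x : ℝ) : |Ls s x| ≤ s := by
  unfold Ls
  have hpi := Real.pi_pos
  rw [abs_mul, abs_of_pos (show (0:ℝ) < 2 * s / Real.pi by positivity)]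
  have h1 : |Real.arctan ((1 + s ^ 2 / 3) * x)| ≤ Real.pi / 2 :=
    le_of_lt (abs_lt.2 ⟨Real.neg_pi_div_two_lt_arctan _, Real.arctan_lt_pi_div_two _⟩)
  calc 2 * s / Real.pi * |Real.arctan ((1 + s ^ 2 / 3) * x)|
      ≤ 2 * s / Real.pi * (Real.pi / 2) := by
        exact mul_le_mul_of_nonneg_left h1 (by positivity)
    _ = s := by field_simp

lemma Ls_le_self (hs : 0 < s) (hs1 : s ≤ 1) (hx : 0 ≤ x) : Ls s x ≤ s * x := by
  unfold Ls
  have hpi := Real.pi_gt_three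
  have hb2 := beta_le hs1 hs
  have h1 : Real.arctan ((1 + s ^ 2 / 3) * x) ≤ (1 + s ^ 2 / 3) * x :=
    arctan_le_self' (by positivity)
  calc (2 * s / Real.pi) * Real.arctan ((1 + s ^ 2 / 3) * x)
      ≤ (2 * s / Real.pi) * ((1 + s ^ 2 / 3) * x) := by
        exact mul_le_mul_of_nonneg_left h1 (by positivity)
    _ ≤ s * x := by
        rw [div_mul_eq_mul_div, div_le_iff₀ (by positivity)]
        nlinarith [mul_nonneg hs.le hx]

lemma abs_Ls_le_lin (hs : 0 < s) (hs1 : s ≤ 1) (x : ℝ) : |Ls s x| ≤ s * |x| := by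
  rcases le_total 0 x with hx | hx
  · rw [abs_of_nonneg hx]
    rw [abs_of_nonneg]
    · exact Ls_le_self hs hs1 hx
    · unfold Ls
      have := arctan_nonneg' (show 0 ≤ (1 + s ^ 2 / 3) * x by positivity)
      have hpi := Real.pi_pos
      positivity
  · rw [abs_of_nonpos hx]
    have hodd : Ls s x = - Ls s (-x) := by
      unfold Ls
      rw [show (1 + s ^ 2 / 3) * (-x) = -((1 + s ^ 2 / 3) * x) by ring, Real.arctan_neg]
      ring
    rw [hodd, abs_neg]
    rw [abs_of_nonneg]
    · exact Ls_le_self hs hs1 (by linarith)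
    · unfold Ls
      have := arctan_nonneg' (show 0 ≤ (1 + s ^ 2 / 3) * (-x) by nlinarith [beta_ge_one s])
      have hpi := Real.pi_pos
      positivity

lemma Ls_mono (hs : 0 < s) {p q : ℝ} (h : p ≤ q) : Ls s p ≤ Ls s q := by
  unfold Ls
  have hpi := Real.pi_pos
  apply mul_le_mul_of_nonneg_left _ (by positivity)
  exact Real.arctan_strictMono.monotone (by nlinarith [beta_ge_one s])

lemma abs_LsD_le (hs : 0 < s) (hs1 : s ≤ 1) (x : ℝ) : |LsD s x| ≤ s / (1 + x ^ 2) := by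
  unfold LsD
  have hpi := Real.pi_gt_three
  have hb1 := beta_ge_one s
  have hb2 := beta_le hs1 hs
  have hD : (0:ℝ) < 1 + (1 + s ^ 2 / 3) ^ 2 * x ^ 2 := by positivity
  rw [abs_of_pos (by positivity)]
  rw [div_mul_div_comm]
  rw [div_le_div_iff₀ (by positivity) (by positivity)]
  have hx2 : x ^ 2 ≤ (1 + s ^ 2 / 3) ^ 2 * x ^ 2 := by
    nlinarith [sq_nonneg (s * x), sq_nonneg (s ^ 2 * x)]
  nlinarith [mul_nonneg hs.le (sq_nonneg x), mul_pos hs hD,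
    mul_le_mul_of_nonneg_left hx2 hs.le]

lemma abs_LsDD_le (hs : 0 < s) (hs1 : s ≤ 1) (x : ℝ) :
    |LsDD s x| ≤ 4 * s * |x| / (1 + x ^ 2) ^ 2 := by
  unfold LsDD
  have hpi := Real.pi_gt_three
  have hb1 := beta_ge_one s
  have hb2 := beta_le hs1 hs
  have hD : (0:ℝ) < 1 + (1 + s ^ 2 / 3) ^ 2 * x ^ 2 := by positivity
  rw [abs_neg, abs_mul, abs_of_pos (show (0:ℝ) < 2 * s / Real.pi by positivity),
    abs_div, abs_of_pos (show (0:ℝ) < (1 + (1 + s ^ 2 / 3) ^ 2 * x ^ 2) ^ 2 by positivity),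
    abs_mul, abs_of_pos (show (0:ℝ) < 2 * (1 + s ^ 2 / 3) ^ 3 by positivity)]
  rw [div_mul_div_comm]
  rw [div_le_div_iff₀ (by positivity) (by positivity)]
  have k0 : 1 + x ^ 2 ≤ 1 + (1 + s ^ 2 / 3) ^ 2 * x ^ 2 := by
    nlinarith [sq_nonneg (s * x), sq_nonneg (s ^ 2 * x)]
  have k1 : (1 + x ^ 2) ^ 2 ≤ (1 + (1 + s ^ 2 / 3) ^ 2 * x ^ 2) ^ 2 := by nlinarith [sq_nonneg x]
  have k2 : (1 + s ^ 2 / 3) ^ 3 ≤ 3 := by nlinarith [sq_nonneg s, sq_nonneg (s^2)]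
  have key : (1 + s ^ 2 / 3) ^ 3 * (1 + x ^ 2) ^ 2 ≤ Real.pi * (1 + (1 + s ^ 2 / 3) ^ 2 * x ^ 2) ^ 2 := by
    calc (1 + s ^ 2 / 3) ^ 3 * (1 + x ^ 2) ^ 2 ≤ 3 * (1 + x ^ 2) ^ 2 :=
          mul_le_mul_of_nonneg_right k2 (by positivity)
      _ ≤ 3 * (1 + (1 + s ^ 2 / 3) ^ 2 * x ^ 2) ^ 2 := by nlinarith
      _ ≤ Real.pi * (1 + (1 + s ^ 2 / 3) ^ 2 * x ^ 2) ^ 2 := by nlinarith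
  calc 2 * s * (2 * (1 + s ^ 2 / 3) ^ 3 * |x|) * (1 + x ^ 2) ^ 2
      = 4 * s * |x| * ((1 + s ^ 2 / 3) ^ 3 * (1 + x ^ 2) ^ 2) := by ring
    _ ≤ 4 * s * |x| * (Real.pi * (1 + (1 + s ^ 2 / 3) ^ 2 * x ^ 2) ^ 2) := by
        exact mul_le_mul_of_nonneg_left key (by positivity)
    _ = 4 * s * |x| * (Real.pi * (1 + (1 + s ^ 2 / 3) ^ 2 * x ^ 2) ^ 2) := rfl

end Bounds

section Diff
variable {s p q : ℝ}

lemma Ls_diff_le (hs : 0 < s) (hs1 : s ≤ 1) (hp : 0 ≤ p) (hpq : p ≤ q) :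
    Ls s q - Ls s p ≤ s * (q - p) / (1 + p ^ 2) := by
  have h := mvt_abs (f := Ls s) (f' := LsD s) (M := s / (1 + p ^ 2)) hpq
    (fun x _ => hasDerivAt_Ls s x)
    (fun x hx => by
      refine (abs_LsD_le hs hs1 x).trans ?_
      apply div_le_div_of_nonneg_left hs.le (by positivity)
      nlinarith [hx.1, sq_nonneg (x - p), sq_nonneg (x + p)])
  calc Ls s q - Ls s p ≤ |Ls s q - Ls s p| := le_abs_self _
    _ ≤ s / (1 + p ^ 2) * (q - p) := h
    _ = s * (q - p) / (1 + p ^ 2) := by ring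

lemma Ls_diff_le_global (hs : 0 < s) (hs1 : s ≤ 1) (hpq : p ≤ q) :
    Ls s q - Ls s p ≤ s * (q - p) := by
  have h := mvt_abs (f := Ls s) (f' := LsD s) (M := s) hpq
    (fun x _ => hasDerivAt_Ls s x)
    (fun x _ => by
      refine (abs_LsD_le hs hs1 x).trans ?_
      rw [div_le_iff₀ (by positivity)]
      nlinarith [mul_nonneg hs.le (sq_nonneg x)])
  calc Ls s q - Ls s p ≤ |Ls s q - Ls s p| := le_abs_self _
    _ ≤ s * (q - p) := h

lemma Ls_tail (hs : 0 < s) (hs1 : s ≤ 1) (hp : 0 ≤ p) (q : ℝ) :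
    Ls s q - Ls s p ≤ 2 * s / Real.sqrt (1 + p ^ 2) := by
  have hpi := Real.pi_gt_three
  have hb1 := beta_ge_one s
  have h1 : Ls s q ≤ s := (le_abs_self _).trans (abs_Ls_le hs q)
  have h2 : Real.arctan p ≤ Real.arctan ((1 + s ^ 2 / 3) * p) :=
    Real.arctan_strictMono.monotone (by nlinarith)
  have h3 : s - Ls s p ≤ (2 * s / Real.pi) * (Real.pi / 2 - Real.arctan p) := by
    unfold Ls
    have : (2 * s / Real.pi) * (Real.pi / 2) = s := by field_simp
    nlinarith [mul_le_mul_of_nonneg_left h2 (show (0:ℝ) ≤ 2 * s / Real.pi by positivity)]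
  have h4 : (2 * s / Real.pi) * (Real.pi / 2 - Real.arctan p)
      ≤ (2 * s / Real.pi) * (3 / Real.sqrt (1 + p ^ 2)) :=
    mul_le_mul_of_nonneg_left (arctan_tail hp) (by positivity)
  have hw : (0:ℝ) < Real.sqrt (1 + p ^ 2) := Real.sqrt_pos.2 (by positivity)
  have h5 : (2 * s / Real.pi) * (3 / Real.sqrt (1 + p ^ 2)) ≤ 2 * s / Real.sqrt (1 + p ^ 2) := by
    rw [div_mul_div_comm, div_le_div_iff₀ (by positivity) hw]
    nlinarith [mul_pos hs hw]
  linarith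

lemma Ls_secdiff (s : ℝ) {α M : ℝ} (hα : 0 < α) (y : ℝ)
    (hM : ∀ x ∈ Icc (y - α) (y + α), |LsDD s x| ≤ M) :
    |(Ls s y - Ls s (y - α)) - (Ls s (y + α) - Ls s y)| ≤ M * α ^ 2 := by
  have hM0 : 0 ≤ M := (abs_nonneg _).trans (hM (y - α) ⟨le_refl _, by linarith⟩)
  set g : ℝ → ℝ := fun t => Ls s (t + α) - Ls s t with hg_def
  have hgd : ∀ t : ℝ, HasDerivAt g (LsD s (t + α) - LsD s t) t := by
    intro t
    have h1 : HasDerivAt (fun t : ℝ => Ls s (t + α)) (LsD s (t + α)) t := by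
      exact HasDerivAt.comp_add_const t α (hasDerivAt_Ls s (t + α))
    exact h1.sub (hasDerivAt_Ls s t)
  have hgb : ∀ t ∈ Icc (y - α) y, |LsD s (t + α) - LsD s t| ≤ M * α := by
    intro t ht
    have h := mvt_abs (f := LsD s) (f' := LsDD s) (M := M) (by linarith : t ≤ t + α)
      (fun x _ => hasDerivAt_LsD s x)
      (fun x hx => hM x ⟨by linarith [ht.1, hx.1], by linarith [ht.2, hx.2]⟩)
    simpa using h
  have houter := mvt_abs (f := g) (f' := fun t => LsD s (t + α) - LsD s t) (M := M * α)
    (by linarith : y - α ≤ y) (fun t _ => hgd t) hgb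
  have hrw : g y - g (y - α) = (Ls s (y + α) - Ls s y) - (Ls s y - Ls s (y - α)) := by
    simp only [hg_def]
    ring_nf
  rw [abs_sub_comm]
  rw [← hrw]
  calc |g y - g (y - α)| ≤ M * α * (y - (y - α)) := houter
    _ = M * α ^ 2 := by ring

end Diff

section Integral
variable {s α y : ℝ}

lemma intLs (s a b : ℝ) : IntervalIntegrable (Ls s) volume a b :=
  (continuous_Ls s).intervalIntegrable a b

lemma intLs_eq (s u v : ℝ) : ∫ t in u..v, Ls s t = Phi s v - Phi s u := by
  have h := intervalIntegral.integral_add_adjacent_intervals (intLs s 0 u) (intLs s u v)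
  unfold Phi
  linarith

lemma hasDerivAt_Phi (s u : ℝ) : HasDerivAt (Phi s) (Ls s u) u := by
  unfold Phi
  exact intervalIntegral.integral_hasDerivAt_right (intLs s 0 u)
    ((continuous_Ls s).stronglyMeasurableAtFilter _ _)
    (continuous_Ls s).continuousAt

lemma continuous_Phi (s : ℝ) : Continuous (Phi s) := by
  rw [continuous_iff_continuousAt]
  exact fun u => (hasDerivAt_Phi s u).continuousAt

lemma deltaOp_repr (s : ℝ) (hα : α ≠ 0) (z : ℝ) :
    deltaOp α (Ls s) (Ls s) z
      = ((Phi s z - Phi s (z - α)) ^ 2 - (Phi s (z + α) - Phi s z) ^ 2) / α ^ 2 := by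
  unfold deltaOp fint
  rw [show z - -α = z + α by ring]
  rw [intLs_eq s (z - α) z, intLs_eq s (z + α) z]
  field_simp
  ring

lemma hasDerivAt_deltaOp (s : ℝ) (hα : α ≠ 0) (t : ℝ) :
    HasDerivAt (fun z => deltaOp α (Ls s) (Ls s) z) (Dfun s α t) t := by
  have hrepr : (fun z => deltaOp α (Ls s) (Ls s) z)
      = fun z => ((Phi s z - Phi s (z - α)) ^ 2 - (Phi s (z + α) - Phi s z) ^ 2) / α ^ 2 :=
    funext (deltaOp_repr s hα)
  rw [hrepr]
  have h1 : HasDerivAt (fun z : ℝ => Phi s (z - α)) (Ls s (t - α)) t := by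
    exact HasDerivAt.comp_sub_const t α (hasDerivAt_Phi s (t - α))
  have h2 : HasDerivAt (fun z : ℝ => Phi s (z + α)) (Ls s (t + α)) t := by
    exact HasDerivAt.comp_add_const t α (hasDerivAt_Phi s (t + α))
  have hA : HasDerivAt (fun z => Phi s z - Phi s (z - α)) (Ls s t - Ls s (t - α)) t :=
    (hasDerivAt_Phi s t).sub h1
  have hB : HasDerivAt (fun z => Phi s (z + α) - Phi s z) (Ls s (t + α) - Ls s t) t :=
    h2.sub (hasDerivAt_Phi s t)
  have h := ((hA.pow 2).sub (hB.pow 2)).div_const (α ^ 2)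
  refine h.congr_deriv ?_
  unfold Dfun
  push_cast
  ring

lemma continuous_Dfun (s α : ℝ) : Continuous (Dfun s α) := by
  unfold Dfun
  apply Continuous.div_const
  apply Continuous.sub
  · apply Continuous.mul
    · exact (continuous_const.mul ((continuous_Phi s).sub
        ((continuous_Phi s).comp (continuous_id.sub continuous_const))))
    · exact ((continuous_Ls s).sub ((continuous_Ls s).comp (continuous_id.sub continuous_const)))
  · apply Continuous.mul
    · exact (continuous_const.mul (((continuous_Phi s).comp
        (continuous_id.add continuous_const)).sub (continuous_Phi s)))
    · exact (((continuous_Ls s).comp (continuous_id.add continuous_const)).sub (continuous_Ls s))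

lemma deltaOp_zero_eq (s : ℝ) (hα : α ≠ 0) : deltaOp α (Ls s) (Ls s) 0 = 0 := by
  have hodd : ∀ x : ℝ, Ls s (-x) = -Ls s x := by
    intro x
    unfold Ls
    rw [show (1 + s ^ 2 / 3) * (-x) = -((1 + s ^ 2 / 3) * x) by ring, Real.arctan_neg]
    ring
  have h1 : ∫ t in (0:ℝ)..α, Ls s (-t) = ∫ t in (-α)..(0:ℝ), Ls s t := by
    simpa using intervalIntegral.integral_comp_neg (a := 0) (b := α) (fun t => Ls s t)
  have h2 : ∫ t in (0:ℝ)..α, Ls s (-t) = -∫ t in (0:ℝ)..α, Ls s t := by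
    simp only [hodd]
    exact intervalIntegral.integral_neg
  unfold deltaOp fint
  rw [show (0:ℝ) - α = -α by ring, show (0:ℝ) - -α = α by ring]
  rw [show ∫ z in α..(0:ℝ), Ls s z = -∫ z in (0:ℝ)..α, Ls s z from intervalIntegral.integral_symm 0 α]
  rw [show ∫ z in (-α)..(0:ℝ), Ls s z = -∫ z in (0:ℝ)..α, Ls s z by rw [← h1, h2]]
  ring

end Integral

section IntBounds
variable {s α y : ℝ}

lemma abs_intLs_le (hs : 0 < s) {u v : ℝ} (huv : u ≤ v) :
    |∫ t in u..v, Ls s t| ≤ s * (v - u) := by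
  have h := intervalIntegral.norm_integral_le_of_norm_le_const (C := s)
    (f := Ls s) (a := u) (b := v) (fun x _ => by rw [Real.norm_eq_abs]; exact abs_Ls_le hs x)
  rwa [Real.norm_eq_abs, abs_of_nonneg (by linarith : (0:ℝ) ≤ v - u)] at h

lemma int_shift (s α y : ℝ) : (∫ z in (y - α)..y, Ls s (z + α)) = ∫ z in y..(y + α), Ls s z := by
  rw [intervalIntegral.integral_comp_add_right (fun z => Ls s z) α]
  rw [show y - α + α = y by ring]

lemma aSubB (s α y : ℝ) :
    (∫ z in (y - α)..y, Ls s z) - ∫ z in y..(y + α), Ls s z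
      = ∫ z in (y - α)..y, (Ls s z - Ls s (z + α)) := by
  have hg : IntervalIntegrable (fun z : ℝ => Ls s (z + α)) volume (y - α) y :=
    Continuous.intervalIntegrable
      (show Continuous fun z : ℝ => Ls s (z + α) from
        (continuous_Ls s).comp (continuous_add_right α)) _ _
  rw [intervalIntegral.integral_sub (intLs s (y - α) y) hg, int_shift]

lemma Dfun_bound (hs : 0 < s) (hs1 : s ≤ 1) (hα : 0 < α) (t : ℝ) :
    |Dfun s α t| ≤ 8 * s ^ 2 * min α α⁻¹ := by
  have h2α : t - α ≤ t := by linarith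
  set A := Phi s t - Phi s (t - α) with hA_def
  set B := Phi s (t + α) - Phi s t with hB_def
  set p := Ls s t - Ls s (t - α) with hp_def
  set q := Ls s (t + α) - Ls s t with hq_def
  have hAint : A = ∫ z in (t - α)..t, Ls s z := (intLs_eq s (t - α) t).symm
  have hBint : B = ∫ z in t..(t + α), Ls s z := (intLs_eq s t (t + α)).symm
  have hA : |A| ≤ s * α := by
    have h := abs_intLs_le hs h2α
    rw [show t - (t - α) = α by ring] at h
    rw [hAint]; exact h
  have hB : |B| ≤ s * α := by
    have h := abs_intLs_le hs (show t ≤ t + α by linarith)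
    rw [show t + α - t = α by ring] at h
    rw [hBint]; exact h
  have hp0 : 0 ≤ p := sub_nonneg.2 (Ls_mono hs h2α)
  have hq0 : 0 ≤ q := sub_nonneg.2 (Ls_mono hs (by linarith))
  have hps : p ≤ s * α := by
    have h := Ls_diff_le_global hs hs1 h2α
    rw [show t - (t - α) = α by ring] at h
    exact h
  have hqs : q ≤ s * α := by
    have h := Ls_diff_le_global hs hs1 (show t ≤ t + α by linarith)
    rw [show t + α - t = α by ring] at h
    exact h
  have hp2 : p ≤ 2 * s := by
    have h1 := abs_le.1 (abs_Ls_le hs t)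
    have h2 := abs_le.1 (abs_Ls_le hs (t - α))
    rw [hp_def]; linarith [h1.2, h2.1]
  have hq2 : q ≤ 2 * s := by
    have h1 := abs_le.1 (abs_Ls_le hs (t + α))
    have h2 := abs_le.1 (abs_Ls_le hs t)
    rw [hq_def]; linarith [h1.2, h2.1]
  have hABd : |A - B| ≤ s * α ^ 2 := by
    rw [hAint, hBint, aSubB]
    have h := intervalIntegral.norm_integral_le_of_norm_le_const (C := s * α)
      (f := fun z => Ls s z - Ls s (z + α)) (a := t - α) (b := t) ?_
    · rw [Real.norm_eq_abs, show t - (t - α) = α by ring, abs_of_pos hα] at h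
      calc |∫ z in (t - α)..t, (Ls s z - Ls s (z + α))| ≤ s * α * α := h
        _ = s * α ^ 2 := by ring
    · intro x _
      rw [Real.norm_eq_abs, abs_sub_comm]
      have h0 : 0 ≤ Ls s (x + α) - Ls s x := sub_nonneg.2 (Ls_mono hs (by linarith))
      rw [abs_of_nonneg h0]
      have h1 := Ls_diff_le_global hs hs1 (show x ≤ x + α by linarith)
      rw [show x + α - x = α by ring] at h1
      exact h1
  have hpqd : |p - q| ≤ 2 * s * α ^ 2 := by
    have h := Ls_secdiff s (M := 2 * s) hα t (fun x _ => by
      refine (abs_LsDD_le hs hs1 x).trans ?_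
      rw [div_le_iff₀ (by positivity)]
      nlinarith [sq_abs x, sq_nonneg (|x| - 1), abs_nonneg x, sq_nonneg x, sq_nonneg (x ^ 2),
        mul_nonneg hs.le (sq_nonneg x), mul_nonneg hs.le (sq_nonneg (x^2)),
        mul_nonneg hs.le (sq_nonneg (|x| - 1))])
    calc |p - q| ≤ 2 * s * α ^ 2 := h
      _ = 2 * s * α ^ 2 := rfl
  have hsum : |p + q| ≤ 2 * (s * α) := by
    rw [abs_of_nonneg (by linarith)]; linarith
  have hABsum : |A + B| ≤ 2 * (s * α) := (abs_add_le A B).trans (by linarith)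
  have hid : Dfun s α t = ((A - B) * (p + q) + (A + B) * (p - q)) / α ^ 2 := by
    rw [hA_def, hB_def, hp_def, hq_def]; unfold Dfun; ring
  have hid2 : Dfun s α t = (2 * A * p - 2 * B * q) / α ^ 2 := by
    rw [hA_def, hB_def, hp_def, hq_def]; unfold Dfun; ring
  have hb1 : |Dfun s α t| ≤ 8 * s ^ 2 * α := by
    rw [hid, abs_div, abs_of_pos (show (0:ℝ) < α ^ 2 by positivity)]
    calc |(A - B) * (p + q) + (A + B) * (p - q)| / α ^ 2
        ≤ (|A - B| * |p + q| + |A + B| * |p - q|) / α ^ 2 := by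
          gcongr
          calc |(A - B) * (p + q) + (A + B) * (p - q)|
              ≤ |(A - B) * (p + q)| + |(A + B) * (p - q)| := abs_add_le _ _
            _ = |A - B| * |p + q| + |A + B| * |p - q| := by rw [abs_mul, abs_mul]
      _ ≤ ((s * α ^ 2) * (2 * (s * α)) + (2 * (s * α)) * (2 * s * α ^ 2)) / α ^ 2 := by
          gcongr <;> positivity
      _ = 6 * s ^ 2 * α := by field_simp; ring
      _ ≤ 8 * s ^ 2 * α := by nlinarith [mul_nonneg (mul_nonneg hs.le hs.le) hα.le]
  have hb2 : |Dfun s α t| ≤ 8 * s ^ 2 * α⁻¹ := by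
    rw [hid2, abs_div, abs_of_pos (show (0:ℝ) < α ^ 2 by positivity)]
    have hAp : |A| * |p| ≤ (s * α) * (2 * s) := by
      apply mul_le_mul hA (by rwa [abs_of_nonneg hp0]) (abs_nonneg _) (by positivity)
    have hBq : |B| * |q| ≤ (s * α) * (2 * s) := by
      apply mul_le_mul hB (by rwa [abs_of_nonneg hq0]) (abs_nonneg _) (by positivity)
    calc |2 * A * p - 2 * B * q| / α ^ 2
        ≤ (2 * (|A| * |p|) + 2 * (|B| * |q|)) / α ^ 2 := by
          gcongr
          calc |2 * A * p - 2 * B * q| ≤ |2 * A * p| + |2 * B * q| := abs_sub _ _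
            _ = 2 * (|A| * |p|) + 2 * (|B| * |q|) := by
                rw [abs_mul, abs_mul, abs_mul, abs_mul]
                simp [abs_of_pos]
                ring
      _ ≤ (2 * ((s * α) * (2 * s)) + 2 * ((s * α) * (2 * s))) / α ^ 2 := by gcongr
      _ = 8 * s ^ 2 * α⁻¹ := by field_simp; ring
  rcases le_total α α⁻¹ with h | h
  · rw [min_eq_left h]; exact hb1
  · rw [min_eq_right h]; exact hb2

end IntBounds

section Tail
variable {s α y : ℝ}

lemma absAB_tail (hs : 0 < s) (hs1 : s ≤ 1) (hα : 0 < α) (hαy : α ≤ y) :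
    |(∫ z in (y - α)..y, Ls s z) - ∫ z in y..(y + α), Ls s z| ≤ 2 * s * Real.arsinh y := by
  have hy0 : (0:ℝ) ≤ y - α := by linarith
  have hyy : (0:ℝ) ≤ y := by linarith
  rw [aSubB]
  have hcontg : Continuous fun z : ℝ => Ls s (z + α) - Ls s z :=
    ((continuous_Ls s).comp (continuous_add_right α)).sub (continuous_Ls s)
  have hcont2 : Continuous fun z : ℝ => 2 * s / Real.sqrt (1 + z ^ 2) := by
    apply continuous_const.div
    · exact Real.continuous_sqrt.comp (by continuity)
    · intro z
      exact ne_of_gt (Real.sqrt_pos.2 (by positivity))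
  have hflip : (fun z : ℝ => Ls s z - Ls s (z + α)) = fun z => -(Ls s (z + α) - Ls s z) := by
    funext z; ring
  rw [hflip, intervalIntegral.integral_neg, abs_neg]
  have hI0 : 0 ≤ ∫ z in (y - α)..y, (Ls s (z + α) - Ls s z) := by
    apply intervalIntegral.integral_nonneg (by linarith)
    intro u _
    exact sub_nonneg.2 (Ls_mono hs (by linarith))
  rw [abs_of_nonneg hI0]
  have h1 : (∫ z in (y - α)..y, (Ls s (z + α) - Ls s z))
      ≤ ∫ z in (y - α)..y, 2 * s / Real.sqrt (1 + z ^ 2) := by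
    apply intervalIntegral.integral_mono_on (by linarith)
      (hcontg.intervalIntegrable _ _) (hcont2.intervalIntegrable _ _)
    intro z hz
    exact Ls_tail hs hs1 (by linarith [hz.1]) (z + α)
  have h2 : (∫ z in (y - α)..y, 2 * s / Real.sqrt (1 + z ^ 2))
      ≤ ∫ z in (0:ℝ)..y, 2 * s / Real.sqrt (1 + z ^ 2) := by
    have hadd := intervalIntegral.integral_add_adjacent_intervals
      (hcont2.intervalIntegrable (μ := volume) 0 (y - α))
      (hcont2.intervalIntegrable (μ := volume) (y - α) y)
    have hpos : 0 ≤ ∫ z in (0:ℝ)..(y - α), 2 * s / Real.sqrt (1 + z ^ 2) := by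
      apply intervalIntegral.integral_nonneg hy0
      intro u _
      positivity
    linarith
  have h3 : (∫ z in (0:ℝ)..y, 2 * s / Real.sqrt (1 + z ^ 2)) = 2 * s * Real.arsinh y := by
    have hD : ∀ z : ℝ, HasDerivAt (fun u => 2 * s * Real.arsinh u)
        (2 * s / Real.sqrt (1 + z ^ 2)) z := by
      intro z
      have := (Real.hasDerivAt_arsinh z).const_mul (2 * s)
      simpa [div_eq_mul_inv] using this
    rw [intervalIntegral.integral_eq_sub_of_hasDerivAt (fun z _ => hD z)
      (hcont2.intervalIntegrable 0 y)]
    rw [Real.arsinh_zero]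
    ring
  linarith

lemma arsinh_le_3log (hy : 0 ≤ y) (hα : 0 < α) (h2 : y ≤ 2 * α) :
    Real.arsinh y ≤ 3 * Real.log (Real.exp 1 + α) := by
  have he : (2:ℝ) ≤ Real.exp 1 := by nlinarith [Real.add_one_le_exp 1]
  have hsq : Real.sqrt (1 + y ^ 2) ≤ 1 + y := by
    have h1 := Real.sqrt_le_sqrt (show 1 + y ^ 2 ≤ (1 + y) ^ 2 by nlinarith)
    rwa [Real.sqrt_sq (by linarith)] at h1
  have h0 : Real.arsinh y = Real.log (y + Real.sqrt (1 + y ^ 2)) := rfl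
  rw [h0]
  have hcube : 1 + 2 * y ≤ (Real.exp 1 + α) ^ 3 := by
    have h1 : (2 + α) ^ 3 ≤ (Real.exp 1 + α) ^ 3 :=
      pow_le_pow_left₀ (by positivity) (by linarith) 3
    nlinarith [sq_nonneg α, mul_nonneg (mul_nonneg hα.le hα.le) hα.le]
  calc Real.log (y + Real.sqrt (1 + y ^ 2)) ≤ Real.log (1 + 2 * y) := by
        apply Real.log_le_log (by positivity)
        linarith
    _ ≤ Real.log ((Real.exp 1 + α) ^ 3) := Real.log_le_log (by positivity) hcube
    _ = 3 * Real.log (Real.exp 1 + α) := by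
        rw [Real.log_pow]; norm_num

lemma one_le_log_exp_add (hα : 0 < α) : 1 ≤ Real.log (Real.exp 1 + α) := by
  have h := Real.log_le_log (Real.exp_pos 1) (show Real.exp 1 ≤ Real.exp 1 + α by linarith)
  rwa [Real.log_exp] at h

end Tail


set_option maxHeartbeats 4000000 in
/-- Pointwise bounds on the elementary brick `δ_α[L_s]` and its `y`-derivative. -/
theorem deltaOp_Ls_bounds :
    ∃ C : ℝ, 0 < C ∧ ∀ s : ℝ, 0 < s → s ≤ 1 → ∀ y : ℝ, 0 ≤ y → ∀ α : ℝ, 0 < α →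
      (|deltaOp α (Ls s) (Ls s) y| ≤ C * s ^ 2 *
          ((if α ≤ y then α * Real.log (Real.exp 1 + α) * min y (y ^ 2)⁻¹ else 0)
            + (if y ≤ α then y * min α α⁻¹ else 0))) ∧
      (|deriv (fun z => deltaOp α (Ls s) (Ls s) z) y| ≤ C * s ^ 2 *
          ((if α ≤ y then α * Real.log (Real.exp 1 + α)
              * (Real.sqrt (1 + (y - α) ^ 2))⁻¹ * (1 + y ^ 2)⁻¹ else 0)
            + (if y ≤ α then min α α⁻¹ else 0))) := by
  refine ⟨1000, by norm_num, ?_⟩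
  intro s hs hs1 y hy α hα
  have hαne : α ≠ 0 := ne_of_gt hα
  have hlog1 : 1 ≤ Real.log (Real.exp 1 + α) := one_le_log_exp_add hα
  have hlog0 : 0 ≤ Real.log (Real.exp 1 + α) := by linarith
  have hmin0 : 0 ≤ min α α⁻¹ := le_min hα.le (by positivity)
  have hDeq : deriv (fun z => deltaOp α (Ls s) (Ls s) z) y = Dfun s α y :=
    (hasDerivAt_deltaOp s hαne y).deriv
  constructor
  · -- value bound
    rcases le_or_gt y α with hyα | hαy
    · -- small y : FTC from 0
      have hFTC : (∫ t in (0:ℝ)..y, Dfun s α t)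
          = deltaOp α (Ls s) (Ls s) y - deltaOp α (Ls s) (Ls s) 0 :=
        intervalIntegral.integral_eq_sub_of_hasDerivAt
          (fun t _ => hasDerivAt_deltaOp s hαne t)
          ((continuous_Dfun s α).intervalIntegrable 0 y)
      have hval : deltaOp α (Ls s) (Ls s) y = ∫ t in (0:ℝ)..y, Dfun s α t := by
        rw [hFTC, deltaOp_zero_eq s hαne]; ring
      have habs : |deltaOp α (Ls s) (Ls s) y| ≤ 8 * s ^ 2 * min α α⁻¹ * y := by
        rw [hval]
        have h := intervalIntegral.norm_integral_le_of_norm_le_const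
          (C := 8 * s ^ 2 * min α α⁻¹) (f := Dfun s α) (a := 0) (b := y)
          (fun t _ => by rw [Real.norm_eq_abs]; exact Dfun_bound hs hs1 hα t)
        rw [Real.norm_eq_abs, sub_zero, abs_of_nonneg hy] at h
        exact h
      have hIf1 : 0 ≤ (if α ≤ y then α * Real.log (Real.exp 1 + α) * min y (y ^ 2)⁻¹ else 0) := by
        split
        · have h1 : 0 ≤ min y (y ^ 2)⁻¹ := le_min hy (by positivity)
          positivity
        · exact le_refl 0
      rw [if_pos hyα]
      have hs2 : (0:ℝ) ≤ 1000 * s ^ 2 := by positivity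
      calc |deltaOp α (Ls s) (Ls s) y| ≤ 8 * s ^ 2 * min α α⁻¹ * y := habs
        _ ≤ 1000 * s ^ 2 * (y * min α α⁻¹) := by
            have h9 := mul_nonneg (mul_nonneg (sq_nonneg s) hy) hmin0
            nlinarith [h9]
        _ ≤ 1000 * s ^ 2 * ((if α ≤ y then α * Real.log (Real.exp 1 + α) * min y (y ^ 2)⁻¹ else 0)
              + y * min α α⁻¹) :=
            mul_le_mul_of_nonneg_left (le_add_of_nonneg_left hIf1) hs2
    · -- α < y
      have hαy' : α ≤ y := hαy.le
      have hy0 : (0:ℝ) ≤ y - α := by linarith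
      have hypos : 0 < y := lt_trans hα hαy
      rw [if_pos hαy', if_neg (not_le.2 hαy), add_zero]
      obtain ⟨A, hA_def⟩ : ∃ A : ℝ, A = ∫ z in (y - α)..y, Ls s z := ⟨_, rfl⟩
      obtain ⟨B, hB_def⟩ : ∃ B : ℝ, B = ∫ z in y..(y + α), Ls s z := ⟨_, rfl⟩
      have hval : deltaOp α (Ls s) (Ls s) y = (A - B) * (A + B) / α ^ 2 := by
        rw [deltaOp_repr s hαne y, hA_def, hB_def, intLs_eq s (y - α) y, intLs_eq s y (y + α)]
        ring
      have hA_s : |A| ≤ s * α := by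
        rw [hA_def]
        have h := abs_intLs_le hs (show y - α ≤ y by linarith)
        rwa [show y - (y - α) = α by ring] at h
      have hB_s : |B| ≤ s * α := by
        rw [hB_def]
        have h := abs_intLs_le hs (show y ≤ y + α by linarith)
        rwa [show y + α - y = α by ring] at h
      have hABsum2 : |A + B| ≤ 2 * (s * α) := (abs_add_le A B).trans (by linarith)
      have hABd1 : |A - B| ≤ s * α ^ 2 / (1 + (y - α) ^ 2) := by
        rw [hA_def, hB_def, aSubB]
        have h := intervalIntegral.norm_integral_le_of_norm_le_const
          (C := s * α / (1 + (y - α) ^ 2))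
          (f := fun z => Ls s z - Ls s (z + α)) (a := y - α) (b := y) ?_
        · rw [Real.norm_eq_abs, show y - (y - α) = α by ring, abs_of_pos hα] at h
          calc |∫ z in (y - α)..y, (Ls s z - Ls s (z + α))|
              ≤ s * α / (1 + (y - α) ^ 2) * α := h
            _ = s * α ^ 2 / (1 + (y - α) ^ 2) := by ring
        · intro x hx
          rw [Set.uIoc_of_le (show y - α ≤ y by linarith)] at hx
          have hx1 : y - α < x := hx.1
          have hx0 : 0 ≤ x := by linarith
          rw [Real.norm_eq_abs, abs_sub_comm,
            abs_of_nonneg (sub_nonneg.2 (Ls_mono hs (by linarith : x ≤ x + α)))]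
          have h1 := Ls_diff_le hs hs1 hx0 (show x ≤ x + α by linarith)
          rw [show x + α - x = α by ring] at h1
          refine h1.trans ?_
          apply div_le_div_of_nonneg_left (by positivity) (by positivity)
          nlinarith
      rcases le_total y 1 with hy1 | hy1
      · -- region Ia : α ≤ y ≤ 1
        have hmin : min y (y ^ 2)⁻¹ = y := by
          apply min_eq_left
          calc y = y * y ^ 2 * (y ^ 2)⁻¹ := by field_simp
            _ ≤ 1 * (y ^ 2)⁻¹ := by
                apply mul_le_mul_of_nonneg_right (by nlinarith) (by positivity)
            _ = (y ^ 2)⁻¹ := one_mul _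
        rw [hmin]
        have hA_y : |A| ≤ s * y * α := by
          rw [hA_def]
          have h := intervalIntegral.norm_integral_le_of_norm_le_const
            (C := s * y) (f := Ls s) (a := y - α) (b := y) ?_
          · rwa [Real.norm_eq_abs, show y - (y - α) = α by ring, abs_of_pos hα] at h
          · intro x hx
            rw [Set.uIoc_of_le (show y - α ≤ y by linarith)] at hx
            rw [Real.norm_eq_abs]
            calc |Ls s x| ≤ s * |x| := abs_Ls_le_lin hs hs1 x
              _ = s * x := by rw [abs_of_nonneg (by linarith [hx.1])]
              _ ≤ s * y := mul_le_mul_of_nonneg_left hx.2 hs.le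
        have hB_y : |B| ≤ s * (2 * y) * α := by
          rw [hB_def]
          have h := intervalIntegral.norm_integral_le_of_norm_le_const
            (C := s * (2 * y)) (f := Ls s) (a := y) (b := y + α) ?_
          · rwa [Real.norm_eq_abs, show y + α - y = α by ring, abs_of_pos hα] at h
          · intro x hx
            rw [Set.uIoc_of_le (show y ≤ y + α by linarith)] at hx
            rw [Real.norm_eq_abs]
            calc |Ls s x| ≤ s * |x| := abs_Ls_le_lin hs hs1 x
              _ = s * x := by rw [abs_of_nonneg (by linarith [hx.1])]
              _ ≤ s * (2 * y) := mul_le_mul_of_nonneg_left (by linarith [hx.2]) hs.le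
        have hABsum3 : |A + B| ≤ 3 * s * y * α := by
          refine (abs_add_le A B).trans ?_
          nlinarith
        have hd : |A - B| ≤ s * α ^ 2 := by
          refine hABd1.trans ?_
          apply div_le_self (by positivity) (by nlinarith)
        calc |deltaOp α (Ls s) (Ls s) y| = |A - B| * |A + B| / α ^ 2 := by
              rw [hval, abs_div, abs_mul, abs_of_pos (show (0:ℝ) < α ^ 2 by positivity)]
          _ ≤ (s * α ^ 2) * (3 * s * y * α) / α ^ 2 := by gcongr
          _ = 3 * s ^ 2 * α * y := by field_simp
          _ ≤ 1000 * s ^ 2 * (α * Real.log (Real.exp 1 + α) * y) := by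
              linarith [mul_nonneg (mul_nonneg (mul_nonneg (sq_nonneg s) hα.le) hy)
                  (sub_nonneg.2 hlog1),
                mul_nonneg (mul_nonneg (sq_nonneg s) hα.le) hy]
      · -- y ≥ 1
        have hy2 : (0:ℝ) < y ^ 2 := by positivity
        have hmin : min y (y ^ 2)⁻¹ = (y ^ 2)⁻¹ := by
          apply min_eq_right
          have h2 : (1:ℝ) ≤ y ^ 2 := by nlinarith
          calc (y ^ 2)⁻¹ = 1 / y ^ 2 := by ring
            _ ≤ 1 / 1 := one_div_le_one_div_of_le one_pos h2
            _ ≤ y := by norm_num; linarith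
        rw [hmin]
        rcases le_total (2 * α) y with h2a | h2a
        · -- region Ib : 2α ≤ y
          have hden : 1 + y ^ 2 ≤ 4 * (1 + (y - α) ^ 2) := by
            linarith [mul_le_mul (show y / 2 ≤ y - α by linarith)
              (show y / 2 ≤ y - α by linarith) (by linarith) (by linarith)]
          have hd : |A - B| ≤ 4 * s * α ^ 2 / (1 + y ^ 2) := by
            refine hABd1.trans ?_
            rw [div_le_div_iff₀ (by positivity) (by positivity)]
            linarith [mul_le_mul_of_nonneg_left hden
              (mul_nonneg hs.le (sq_nonneg α))]
          calc |deltaOp α (Ls s) (Ls s) y| = |A - B| * |A + B| / α ^ 2 := by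
                rw [hval, abs_div, abs_mul, abs_of_pos (show (0:ℝ) < α ^ 2 by positivity)]
            _ ≤ (4 * s * α ^ 2 / (1 + y ^ 2)) * (2 * (s * α)) / α ^ 2 := by gcongr
            _ = 8 * s ^ 2 * α / (1 + y ^ 2) := by field_simp; ring
            _ ≤ 1000 * s ^ 2 * α * Real.log (Real.exp 1 + α) / y ^ 2 := by
                rw [div_le_div_iff₀ (by positivity) hy2]
                linarith [mul_nonneg (mul_nonneg (sq_nonneg s) hα.le) (sq_nonneg y),
                  mul_nonneg (mul_nonneg (sq_nonneg s) hα.le) (by norm_num : (0:ℝ) ≤ 1),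
                  mul_nonneg (mul_nonneg (mul_nonneg (sq_nonneg s) hα.le)
                    (by positivity : (0:ℝ) ≤ 1 + y ^ 2)) (sub_nonneg.2 hlog1)]
            _ = 1000 * s ^ 2 * (α * Real.log (Real.exp 1 + α) * (y ^ 2)⁻¹) := by ring
        · -- region Ic : y ≤ 2α
          have hd : |A - B| ≤ 6 * s * Real.log (Real.exp 1 + α) := by
            have h1 := absAB_tail hs hs1 hα hαy'
            have h2 := arsinh_le_3log hy hα h2a
            calc |A - B| ≤ 2 * s * Real.arsinh y := by rw [hA_def, hB_def]; exact h1
              _ ≤ 2 * s * (3 * Real.log (Real.exp 1 + α)) :=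
                  mul_le_mul_of_nonneg_left h2 (by positivity)
              _ = 6 * s * Real.log (Real.exp 1 + α) := by ring
          calc |deltaOp α (Ls s) (Ls s) y| = |A - B| * |A + B| / α ^ 2 := by
                rw [hval, abs_div, abs_mul, abs_of_pos (show (0:ℝ) < α ^ 2 by positivity)]
            _ ≤ (6 * s * Real.log (Real.exp 1 + α)) * (2 * (s * α)) / α ^ 2 := by
                gcongr
            _ = 12 * s ^ 2 * Real.log (Real.exp 1 + α) / α := by field_simp; ring
            _ ≤ 1000 * s ^ 2 * α * Real.log (Real.exp 1 + α) / y ^ 2 := by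
                rw [div_le_div_iff₀ hα hy2]
                have hy4a : y ^ 2 ≤ 4 * α ^ 2 := by
                  linarith [mul_le_mul h2a h2a hy (by positivity : (0:ℝ) ≤ 2 * α)]
                linarith [mul_nonneg (mul_nonneg (sq_nonneg s) hlog0)
                    (by linarith : (0:ℝ) ≤ 4 * α ^ 2 - y ^ 2),
                  mul_nonneg (mul_nonneg (sq_nonneg s) hlog0) (sq_nonneg α)]
            _ = 1000 * s ^ 2 * (α * Real.log (Real.exp 1 + α) * (y ^ 2)⁻¹) := by ring
  · -- derivative bound
    rw [hDeq]
    rcases le_or_gt y α with hyα | hαy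
    · -- small y
      rw [if_pos hyα]
      have hIf1 : 0 ≤ (if α ≤ y then α * Real.log (Real.exp 1 + α)
          * (Real.sqrt (1 + (y - α) ^ 2))⁻¹ * (1 + y ^ 2)⁻¹ else 0) := by
        split
        · have hsq : (0:ℝ) < Real.sqrt (1 + (y - α) ^ 2) := Real.sqrt_pos.2 (by positivity)
          positivity
        · exact le_refl 0
      have hs2 : (0:ℝ) ≤ 1000 * s ^ 2 := by positivity
      calc |Dfun s α y| ≤ 8 * s ^ 2 * min α α⁻¹ := Dfun_bound hs hs1 hα y
        _ ≤ 1000 * s ^ 2 * min α α⁻¹ := by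
            linarith [mul_nonneg (sq_nonneg s) hmin0]
        _ ≤ 1000 * s ^ 2 * ((if α ≤ y then α * Real.log (Real.exp 1 + α)
              * (Real.sqrt (1 + (y - α) ^ 2))⁻¹ * (1 + y ^ 2)⁻¹ else 0) + min α α⁻¹) :=
            mul_le_mul_of_nonneg_left (le_add_of_nonneg_left hIf1) hs2
    · -- α < y
      have hαy' : α ≤ y := hαy.le
      have hy0 : (0:ℝ) ≤ y - α := by linarith
      have hypos : 0 < y := lt_trans hα hαy
      rw [if_pos hαy', if_neg (not_le.2 hαy), add_zero]
      obtain ⟨w, hw_def⟩ : ∃ w : ℝ, w = Real.sqrt (1 + (y - α) ^ 2) := ⟨_, rfl⟩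
      rw [← hw_def]
      have hw0 : 0 < w := hw_def ▸ Real.sqrt_pos.2 (by positivity)
      have hwsq : w ^ 2 = 1 + (y - α) ^ 2 := hw_def ▸ Real.sq_sqrt (by positivity)
      have hw1 : 1 ≤ w := by
        rw [hw_def]
        have h := Real.sqrt_le_sqrt (show (1:ℝ) ≤ 1 + (y - α) ^ 2 by nlinarith)
        rwa [Real.sqrt_one] at h
      have hY : (0:ℝ) < 1 + y ^ 2 := by positivity
      -- reduction using log ≥ 1
      have hred : 1000 * s ^ 2 * (α / (w * (1 + y ^ 2)))
          ≤ 1000 * s ^ 2 * (α * Real.log (Real.exp 1 + α) * w⁻¹ * (1 + y ^ 2)⁻¹) := by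
        apply mul_le_mul_of_nonneg_left _ (by positivity)
        rw [div_eq_mul_inv, mul_inv]
        calc α * (w⁻¹ * (1 + y ^ 2)⁻¹) = α * 1 * w⁻¹ * (1 + y ^ 2)⁻¹ := by ring
          _ ≤ α * Real.log (Real.exp 1 + α) * w⁻¹ * (1 + y ^ 2)⁻¹ := by
              gcongr
      refine le_trans ?_ hred
      -- representation of Dfun at y
      obtain ⟨A, hA_def⟩ : ∃ A : ℝ, A = ∫ z in (y - α)..y, Ls s z := ⟨_, rfl⟩
      obtain ⟨B, hB_def⟩ : ∃ B : ℝ, B = ∫ z in y..(y + α), Ls s z := ⟨_, rfl⟩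
      obtain ⟨p, hp_def⟩ : ∃ p : ℝ, p = Ls s y - Ls s (y - α) := ⟨_, rfl⟩
      obtain ⟨q, hq_def⟩ : ∃ q : ℝ, q = Ls s (y + α) - Ls s y := ⟨_, rfl⟩
      have hDid2 : Dfun s α y = (2 * A * p - 2 * B * q) / α ^ 2 := by
        unfold Dfun
        rw [hA_def, hB_def, hp_def, hq_def, intLs_eq s (y - α) y, intLs_eq s y (y + α)]
      have hDid : Dfun s α y = ((A - B) * (p + q) + (A + B) * (p - q)) / α ^ 2 := by
        rw [hDid2]; ring
      have hA_s : |A| ≤ s * α := by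
        rw [hA_def]
        have h := abs_intLs_le hs (show y - α ≤ y by linarith)
        rwa [show y - (y - α) = α by ring] at h
      have hB_s : |B| ≤ s * α := by
        rw [hB_def]
        have h := abs_intLs_le hs (show y ≤ y + α by linarith)
        rwa [show y + α - y = α by ring] at h
      have hABsum2 : |A + B| ≤ 2 * (s * α) := (abs_add_le A B).trans (by linarith)
      have hp0 : 0 ≤ p := hp_def ▸ sub_nonneg.2 (Ls_mono hs (by linarith))
      have hq0 : 0 ≤ q := hq_def ▸ sub_nonneg.2 (Ls_mono hs (by linarith))
      rcases le_total y 1 with hy1 | hy1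
      · -- region Ia'
        have hw32 : w ≤ 3 / 2 := by
          rw [hw_def]
          have h := Real.sqrt_le_sqrt (show 1 + (y - α) ^ 2 ≤ (3/2) ^ 2 by nlinarith)
          rwa [Real.sqrt_sq (by norm_num)] at h
        have hwy3 : w * (1 + y ^ 2) ≤ 3 := by nlinarith
        calc |Dfun s α y| ≤ 8 * s ^ 2 * min α α⁻¹ := Dfun_bound hs hs1 hα y
          _ ≤ 8 * s ^ 2 * α := mul_le_mul_of_nonneg_left (min_le_left _ _) (by positivity)
          _ ≤ 1000 * s ^ 2 * (α / 3) := by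
              linarith [mul_nonneg (mul_nonneg (sq_nonneg s) hα.le) (by norm_num : (0:ℝ) ≤ 1)]
          _ ≤ 1000 * s ^ 2 * (α / (w * (1 + y ^ 2))) := by
              apply mul_le_mul_of_nonneg_left _ (by positivity)
              apply div_le_div_of_nonneg_left hα.le (by positivity) hwy3
      · rcases le_total (2 * α) y with h2a | h2a
        · -- region Ib'
          have hden : 1 + y ^ 2 ≤ 4 * w ^ 2 := by
            rw [hwsq]
            linarith [mul_le_mul (show y / 2 ≤ y - α by linarith)
              (show y / 2 ≤ y - α by linarith) (by linarith) (by linarith)]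
          have hw2y : w ≤ 2 * y := by
            rw [hw_def]
            have h := Real.sqrt_le_sqrt (show 1 + (y - α) ^ 2 ≤ (2 * y) ^ 2 by nlinarith)
            rwa [Real.sqrt_sq (by positivity)] at h
          have hABd1 : |A - B| ≤ s * α ^ 2 / w ^ 2 := by
            rw [hwsq, hA_def, hB_def, aSubB]
            have h := intervalIntegral.norm_integral_le_of_norm_le_const
              (C := s * α / (1 + (y - α) ^ 2))
              (f := fun z => Ls s z - Ls s (z + α)) (a := y - α) (b := y) ?_
            · rw [Real.norm_eq_abs, show y - (y - α) = α by ring, abs_of_pos hα] at h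
              calc |∫ z in (y - α)..y, (Ls s z - Ls s (z + α))|
                  ≤ s * α / (1 + (y - α) ^ 2) * α := h
                _ = s * α ^ 2 / (1 + (y - α) ^ 2) := by ring
            · intro x hx
              rw [Set.uIoc_of_le (show y - α ≤ y by linarith)] at hx
              have hx1 : y - α < x := hx.1
              have hx0 : 0 ≤ x := by linarith
              rw [Real.norm_eq_abs, abs_sub_comm,
                abs_of_nonneg (sub_nonneg.2 (Ls_mono hs (by linarith : x ≤ x + α)))]
              have h1 := Ls_diff_le hs hs1 hx0 (show x ≤ x + α by linarith)
              rw [show x + α - x = α by ring] at h1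
              refine h1.trans ?_
              apply div_le_div_of_nonneg_left (by positivity) (by positivity)
              nlinarith
          have hpb : p ≤ s * α / w ^ 2 := by
            rw [hwsq]
            have h := Ls_diff_le hs hs1 hy0 (show y - α ≤ y by linarith)
            rw [show y - (y - α) = α by ring] at h
            rw [hp_def]; exact h
          have hqb : q ≤ s * α / w ^ 2 := by
            rw [hwsq]
            have h := Ls_diff_le hs hs1 hy (show y ≤ y + α by linarith)
            rw [show y + α - y = α by ring] at h
            rw [hq_def]
            refine h.trans ?_
            apply div_le_div_of_nonneg_left (by positivity) (by positivity)
            nlinarith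
          have hpsum : |p + q| ≤ 2 * (s * α / w ^ 2) := by
            rw [abs_of_nonneg (by linarith)]; linarith
          have hM : ∀ x ∈ Icc (y - α) (y + α), |LsDD s x| ≤ 96 * s * y / (1 + y ^ 2) ^ 2 := by
            intro x hx
            have hx1 : y - α ≤ x := hx.1
            have hx2 : x ≤ y + α := hx.2
            have hxh : y / 2 ≤ x := by linarith
            have hxpos : 0 < x := by linarith
            refine (abs_LsDD_le hs hs1 x).trans ?_
            rw [abs_of_pos hxpos]
            rw [div_le_div_iff₀ (by positivity) (by positivity)]
            have k0 : 1 + y ^ 2 ≤ 4 * (1 + x ^ 2) := by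
              linarith [mul_le_mul hxh hxh (by linarith) (by linarith)]
            have k1 : (1 + y ^ 2) ^ 2 ≤ 16 * (1 + x ^ 2) ^ 2 := by
              linarith [pow_le_pow_left₀ (by positivity : (0:ℝ) ≤ 1 + y ^ 2) k0 2]
            have k2 : x ≤ 3 / 2 * y := by linarith
            linarith [mul_le_mul_of_nonneg_left k1 (by positivity : (0:ℝ) ≤ 6 * s * y),
              mul_le_mul_of_nonneg_right (mul_le_mul_of_nonneg_left k2
                (by positivity : (0:ℝ) ≤ 4 * s)) (by positivity : (0:ℝ) ≤ (1 + y ^ 2) ^ 2)]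
          have hpqd : |p - q| ≤ 96 * s * y / (1 + y ^ 2) ^ 2 * α ^ 2 := by
            rw [hp_def, hq_def]
            exact Ls_secdiff s hα y hM
          have htri : |(A - B) * (p + q) + (A + B) * (p - q)|
              ≤ |A - B| * |p + q| + |A + B| * |p - q| := by
            refine (abs_add_le _ _).trans ?_
            rw [abs_mul, abs_mul]
          have hstep : |A - B| * |p + q| + |A + B| * |p - q|
              ≤ (s * α ^ 2 / w ^ 2) * (2 * (s * α / w ^ 2))
                + (2 * (s * α)) * (96 * s * y / (1 + y ^ 2) ^ 2 * α ^ 2) := by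
            gcongr
          have hterm1 : 2 * s ^ 2 * α / w ^ 4 ≤ 500 * s ^ 2 * (α / (w * (1 + y ^ 2))) := by
            rw [show (500:ℝ) * s ^ 2 * (α / (w * (1 + y ^ 2)))
                = 500 * s ^ 2 * α / (w * (1 + y ^ 2)) by ring,
              div_le_div_iff₀ (by positivity) (by positivity)]
            have hw3 : w * (1 + y ^ 2) ≤ 4 * w ^ 4 := by
              linarith [mul_le_mul_of_nonneg_left hden hw0.le,
                mul_nonneg (mul_nonneg (mul_nonneg hw0.le hw0.le) hw0.le) (sub_nonneg.2 hw1)]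
            linarith [mul_le_mul_of_nonneg_left hw3 (by positivity : (0:ℝ) ≤ 2 * s ^ 2 * α),
              mul_nonneg (mul_nonneg (mul_nonneg (sq_nonneg s) hα.le) (pow_nonneg hw0.le 4))
                (by norm_num : (0:ℝ) ≤ 1)]
          have hterm2 : 192 * s ^ 2 * y * α / (1 + y ^ 2) ^ 2
              ≤ 500 * s ^ 2 * (α / (w * (1 + y ^ 2))) := by
            rw [show (500:ℝ) * s ^ 2 * (α / (w * (1 + y ^ 2)))
                = 500 * s ^ 2 * α / (w * (1 + y ^ 2)) by ring,
              div_le_div_iff₀ (by positivity) (by positivity)]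
            have hyw : y * w ≤ 2 * (1 + y ^ 2) := by
              linarith [mul_le_mul_of_nonneg_left hw2y hypos.le]
            linarith [mul_le_mul_of_nonneg_left hyw
                (by positivity : (0:ℝ) ≤ 192 * s ^ 2 * α * (1 + y ^ 2)),
              mul_nonneg (mul_nonneg (mul_nonneg (sq_nonneg s) hα.le)
                (sq_nonneg (1 + y ^ 2))) (by norm_num : (0:ℝ) ≤ 1)]
          calc |Dfun s α y|
              = |(A - B) * (p + q) + (A + B) * (p - q)| / α ^ 2 := by
                rw [hDid, abs_div, abs_of_pos (show (0:ℝ) < α ^ 2 by positivity)]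
            _ ≤ ((s * α ^ 2 / w ^ 2) * (2 * (s * α / w ^ 2))
                + (2 * (s * α)) * (96 * s * y / (1 + y ^ 2) ^ 2 * α ^ 2)) / α ^ 2 := by
                gcongr
                exact htri.trans hstep
            _ = 2 * s ^ 2 * α / w ^ 4 + 192 * s ^ 2 * y * α / (1 + y ^ 2) ^ 2 := by
                field_simp
                ring
            _ ≤ 500 * s ^ 2 * (α / (w * (1 + y ^ 2)))
                + 500 * s ^ 2 * (α / (w * (1 + y ^ 2))) := add_le_add hterm1 hterm2
            _ = 1000 * s ^ 2 * (α / (w * (1 + y ^ 2))) := by ring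
        · -- region Ic'
          have hsq_y : w ≤ Real.sqrt (1 + y ^ 2) := by
            rw [hw_def]
            exact Real.sqrt_le_sqrt (by nlinarith)
          have hpt : p ≤ 2 * s / w := by
            rw [hp_def, hw_def]
            exact Ls_tail hs hs1 hy0 y
          have hqt : q ≤ 2 * s / w := by
            rw [hq_def]
            refine (Ls_tail hs hs1 hy (y + α)).trans ?_
            exact div_le_div_of_nonneg_left (by positivity) hw0 hsq_y
          have htri : |2 * A * p - 2 * B * q| ≤ 2 * (|A| * |p|) + 2 * (|B| * |q|) := by
            calc |2 * A * p - 2 * B * q| ≤ |2 * A * p| + |2 * B * q| := abs_sub _ _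
              _ = 2 * (|A| * |p|) + 2 * (|B| * |q|) := by
                  rw [abs_mul, abs_mul, abs_mul, abs_mul]
                  simp [abs_of_pos]
                  ring
          have hstep : 2 * (|A| * |p|) + 2 * (|B| * |q|)
              ≤ 2 * ((s * α) * (2 * s / w)) + 2 * ((s * α) * (2 * s / w)) := by
            have hp' : |p| ≤ 2 * s / w := by rwa [abs_of_nonneg hp0]
            have hq' : |q| ≤ 2 * s / w := by rwa [abs_of_nonneg hq0]
            gcongr
          calc |Dfun s α y| = |2 * A * p - 2 * B * q| / α ^ 2 := by
                rw [hDid2, abs_div, abs_of_pos (show (0:ℝ) < α ^ 2 by positivity)]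
            _ ≤ (2 * ((s * α) * (2 * s / w)) + 2 * ((s * α) * (2 * s / w))) / α ^ 2 := by
                gcongr
                exact htri.trans hstep
            _ = 8 * s ^ 2 / (α * w) := by field_simp; ring
            _ ≤ 1000 * s ^ 2 * (α / (w * (1 + y ^ 2))) := by
                rw [show (1000:ℝ) * s ^ 2 * (α / (w * (1 + y ^ 2)))
                    = 1000 * s ^ 2 * α / (w * (1 + y ^ 2)) by ring,
                  div_le_div_iff₀ (by positivity) (by positivity)]
                have hy4a : 1 + y ^ 2 ≤ 8 * α ^ 2 := by
                  linarith [mul_le_mul h2a h2a hy (by positivity : (0:ℝ) ≤ 2 * α),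
                    mul_le_mul hy1 hy1 (by norm_num) hy]
                linarith [mul_le_mul_of_nonneg_left hy4a
                    (by positivity : (0:ℝ) ≤ 8 * s ^ 2 * w),
                  mul_nonneg (mul_nonneg (sq_nonneg s) (mul_nonneg hα.le hα.le)) hw0.le]
end
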